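/- arXiv:2407.18385 — 5 statements merged into one kernel-verified Lean document; each statement's English description precedes it below -/
import Mathlib

section
/- Let G be a finite group, D ⊆ G, and let Aut(G)_D be the subgroup of automorphisms of G fixing D setwise. Suppose 𝒢 ≤ Aut(G)_D ⋉ G satisfies: |𝒢| = |G|, the subgroup 1 × X := (1 × G) ∩ 𝒢 is normal in both 1 × G and 𝒢, and the action of 𝒢 on the right cosets of X in G given by (Xh)^(φ,g) = X h^φ g is transitive. If D is a (v,k,λ)-difference set in G, then 𝒟 := {(φ,d) ∈ 𝒢 : d ∈ D} is a (v,k,λ)-difference set in 𝒢. -/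
/-- The "right holomorph": pairs (φ, g) with multiplication
(φ₁,g₁)(φ₂,g₂) = (φ₁φ₂, g₁^{φ₂} g₂), composition of automorphisms left-to-right. -/
@[ext] structure RHol (G : Type*) [Group G] where
  aut : MulAut G
  el : G

namespace RHol

variable {G : Type*} [Group G]

instance : Mul (RHol G) := ⟨fun a b => ⟨a.aut.trans b.aut, b.aut a.el * b.el⟩⟩
instance : One (RHol G) := ⟨⟨MulEquiv.refl G, 1⟩⟩
instance : Inv (RHol G) := ⟨fun a => ⟨a.aut.symm, a.aut.symm a.el⁻¹⟩⟩

@[simp] lemma mul_aut (a b : RHol G) : (a * b).aut = a.aut.trans b.aut := rfl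
@[simp] lemma mul_el (a b : RHol G) : (a * b).el = b.aut a.el * b.el := rfl
@[simp] lemma one_aut : (1 : RHol G).aut = MulEquiv.refl G := rfl
@[simp] lemma one_el : (1 : RHol G).el = 1 := rfl
@[simp] lemma inv_aut (a : RHol G) : a⁻¹.aut = a.aut.symm := rfl
@[simp] lemma inv_el (a : RHol G) : a⁻¹.el = a.aut.symm a.el⁻¹ := rfl

instance : Group (RHol G) where
  mul_assoc a b c := by
    refine RHol.ext ?_ ?_
    · exact MulEquiv.ext fun x => rfl
    · show c.aut (b.aut a.el * b.el) * c.el = (b.aut.trans c.aut) a.el * (c.aut b.el * c.el)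
      simp [mul_assoc]
  one_mul a := by
    refine RHol.ext ?_ ?_
    · exact MulEquiv.ext fun x => rfl
    · show a.aut 1 * a.el = a.el
      simp
  mul_one a := by
    refine RHol.ext ?_ ?_
    · exact MulEquiv.ext fun x => rfl
    · show (MulEquiv.refl G) a.el * 1 = a.el
      simp
  inv_mul_cancel a := by
    refine RHol.ext ?_ ?_
    · exact MulEquiv.ext fun x => by simp
    · show a.aut (a.aut.symm a.el⁻¹) * a.el = 1
      simp

end RHol

section Defs

variable {G : Type*} [Group G]

/-- Number of ways to write `g = d₁ * d₂⁻¹` with `d₁, d₂ ∈ D`. -/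
noncomputable def diffCount (D : Set G) (g : G) : ℕ :=
  Nat.card {p : D × D // (p.1 : G) * (p.2 : G)⁻¹ = g}

def IsDiffSet (D : Set G) (v k l : ℕ) : Prop :=
  Nat.card G = v ∧ Nat.card D = k ∧ ∀ g : G, g ≠ 1 → diffCount D g = l

end Defs


section Aux

variable {H : Type*} [Group H]

lemma diffCount_eq_card (D : Set H) (g : H) :
    diffCount D g = Nat.card {e : H // e ∈ D ∧ g * e ∈ D} := by
  apply Nat.card_congr
  refine ⟨fun p => ⟨(p.1.2 : H), p.1.2.2, ?_⟩,
    fun e => ⟨(⟨⟨g * e.1, e.2.2⟩, ⟨e.1, e.2.1⟩⟩ : D × D), by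
      simp [mul_inv_cancel_right]⟩, ?_, ?_⟩
  · obtain ⟨⟨d1, d2⟩, hp⟩ := p
    show g * (d2 : H) ∈ D
    rw [← hp, inv_mul_cancel_right]; exact d1.2
  · intro p
    obtain ⟨⟨d1, d2⟩, hp⟩ := p
    apply Subtype.ext
    apply Prod.ext
    · apply Subtype.ext
      show g * (d2 : H) = (d1 : H)
      rw [← hp, inv_mul_cancel_right]
    · rfl
  · intro e; rfl

end Aux

/-- Combinatorial transfer for difference sets (Theorem 1.1 for DSs). -/
theorem combinatorial_transfer_diff_set {G : Type*} [Group G] [Finite G]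
    (D : Set G) (v k l : ℕ)
    (𝒢 : Subgroup (RHol G)) (X : Subgroup G)
    -- 𝒢 ≤ Aut(G)_D ⋉ G : every automorphism component of 𝒢 fixes D setwise
    (h𝒢le : ∀ x ∈ 𝒢, (RHol.aut x) '' D = D)
    -- (i) |𝒢| = |G|
    (hcard : Nat.card 𝒢 = Nat.card G)
    -- 1 × X = (1 × G) ∩ 𝒢
    (hX : ∀ g : G, g ∈ X ↔ (⟨1, g⟩ : RHol G) ∈ 𝒢)
    -- (ii) X is normal in G and 1 × X is normal in 𝒢
    (hXnormalG : X.Normal)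
    (hXnormal𝒢 : ∀ x ∈ 𝒢, ∀ g ∈ X, ((x⁻¹ * ⟨1, g⟩ * x : RHol G)).el ∈ X)
    -- (iii) the action (Xh)^(φ,g) = X h^φ g of 𝒢 on right cosets of X is transitive
    (htrans : ∀ h₁ h₂ : G, ∃ x ∈ 𝒢, (RHol.aut x) h₁ * (RHol.el x) * h₂⁻¹ ∈ X)
    -- D is a (v,k,λ)-difference set in G
    (hD : IsDiffSet D v k l) :
    -- then 𝒟 = {(φ,d) ∈ 𝒢 : d ∈ D} is a (v,k,λ)-difference set in 𝒢
    IsDiffSet {x : 𝒢 | (x : RHol G).el ∈ D} v k l := by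
  classical
  obtain ⟨hv, hk, hl⟩ := hD
  have hGpos : Nat.card G ≠ 0 := Nat.card_pos.ne'
  have hfin : Finite 𝒢 := Nat.finite_of_card_ne_zero (by rw [hcard]; exact hGpos)
  set π : 𝒢 → G := fun x => (x : RHol G).el with hπdef
  -- surjectivity of π
  have hsurj : Function.Surjective π := by
    intro h
    obtain ⟨x, hx𝒢, hxX⟩ := htrans 1 h
    simp only [map_one, one_mul] at hxX
    -- hxX : x.el * h⁻¹ ∈ X
    have hg0 : x.el⁻¹ * h ∈ X := by
      have := hXnormalG.conj_mem _ (inv_mem hxX) x.el⁻¹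
      simpa [mul_assoc] using this
    refine ⟨(⟨x, hx𝒢⟩ : 𝒢) * ⟨⟨1, x.el⁻¹ * h⟩, (hX _).mp hg0⟩, ?_⟩
    show ((⟨1, x.el⁻¹ * h⟩ : RHol G).aut x.el) * (x.el⁻¹ * h) = h
    simp [mul_assoc]
  have hbij : Function.Bijective π :=
    (Nat.bijective_iff_surjective_and_card π).mpr ⟨hsurj, hcard⟩
  set πE : 𝒢 ≃ G := Equiv.ofBijective π hbij with hπE
  -- aut preserves D
  have hDpres : ∀ b : 𝒢, ∀ z : G, ((b : RHol G).aut.symm z ∈ D ↔ z ∈ D) := by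
    intro b z
    have him := h𝒢le (b : RHol G) b.2
    constructor
    · intro hz
      have : (b : RHol G).aut ((b : RHol G).aut.symm z) ∈ ⇑(b : RHol G).aut '' D :=
        Set.mem_image_of_mem _ hz
      rwa [MulEquiv.apply_symm_apply, him] at this
    · intro hz
      rw [← him] at hz
      obtain ⟨w, hw, rfl⟩ := hz
      simpa using hw
  -- the bijection f : 𝒢 → G, b ↦ b.aut⁻¹ b.el
  set fE : 𝒢 ≃ G := (Equiv.inv 𝒢).trans (πE.trans (Equiv.inv G)) with hfE
  have hfeq : ∀ b : 𝒢, fE b = (b : RHol G).aut.symm (b : RHol G).el := by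
    intro b
    show (π b⁻¹)⁻¹ = (b : RHol G).aut.symm (b : RHol G).el
    show (((b⁻¹ : 𝒢) : RHol G)).el⁻¹ = _
    rw [show ((b⁻¹ : 𝒢) : RHol G) = ((b : 𝒢) : RHol G)⁻¹ from rfl]
    simp
  refine ⟨by rw [hcard, hv], ?_, ?_⟩
  · -- cardinality k
    rw [← hk]
    apply Nat.card_congr
    exact Equiv.subtypeEquiv πE fun b => Iff.rfl
  · -- the λ condition
    intro x hx
    have hg : (x : RHol G).el ≠ 1 := by
      intro h1
      apply hx
      apply hbij.injective
      show (x : RHol G).el = ((1 : 𝒢) : RHol G).el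
      simpa using h1
    set g : G := (x : RHol G).el with hgdef
    rw [diffCount_eq_card]
    have key : Nat.card {b : 𝒢 // b ∈ {y : 𝒢 | (y : RHol G).el ∈ D} ∧
        x * b ∈ {y : 𝒢 | (y : RHol G).el ∈ D}} = Nat.card {e : G // e ∈ D ∧ g * e ∈ D} := by
      apply Nat.card_congr
      refine Equiv.subtypeEquiv fE fun b => ?_
      rw [hfeq b]
      have hmem1 : (b ∈ {y : 𝒢 | (y : RHol G).el ∈ D}) ↔ (b : RHol G).el ∈ D := Iff.rfl
      have hmem2 : (x * b ∈ {y : 𝒢 | (y : RHol G).el ∈ D}) ↔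
          ((b : RHol G).aut g * (b : RHol G).el ∈ D) := by
        show (((x * b : 𝒢) : RHol G)).el ∈ D ↔ _
        rw [show ((x * b : 𝒢) : RHol G) = (x : RHol G) * (b : RHol G) from rfl]
        rfl
      rw [hmem1, hmem2]
      constructor
      · rintro ⟨h1, h2⟩
        refine ⟨(hDpres b _).mpr h1, ?_⟩
        have := (hDpres b _).mpr h2
        rwa [map_mul, MulEquiv.symm_apply_apply] at this
      · rintro ⟨h1, h2⟩
        refine ⟨(hDpres b _).mp h1, ?_⟩
        rw [← hDpres b, map_mul, MulEquiv.symm_apply_apply]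
        exact h2
    rw [key, ← diffCount_eq_card]
    exact hl g hg
end

section
/- Let G be a finite group, D ⊆ G a partial difference set, and 𝒢 ≤ Aut(G)_D ⋉ G a subgroup with |𝒢| = |G| such that 1 × X := (1 × G) ∩ 𝒢 is normal in both 1 × G and 𝒢, and 𝒢 acts transitively on the right cosets of X in G via (Xh)^(φ,g) = X h^φ g. Then 𝒟 := {(φ,d) ∈ 𝒢 : d ∈ D} is a partial difference set in 𝒢 with the same parameters (v,k,λ,μ) as D. -/
section Defs

variable {G : Type*} [Group G]

def IsPDS (D : Set G) (v k l μ : ℕ) : Prop :=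
  Nat.card G = v ∧ Nat.card D = k ∧
    (∀ g ∈ D, g ≠ 1 → diffCount D g = l) ∧
    (∀ g : G, g ∉ D → g ≠ 1 → diffCount D g = μ)

end Defs

section Aux

variable {G : Type*} [Group G]

instance [Finite G] : Finite (RHol G) := by
  refine Finite.of_injective (fun x : RHol G => ((x.aut : G → G), x.el)) ?_
  intro a b h
  obtain ⟨h1, h2⟩ := Prod.mk.injEq _ _ _ _ ▸ h
  exact RHol.ext (MulEquiv.ext fun x => congrFun h1 x) h2

/-- `diffCount` as a count of single elements. -/
private def diffEquivAux (D : Set G) (g : G) :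
    {p : D × D // (p.1 : G) * (p.2 : G)⁻¹ = g} ≃ {d : G // d ∈ D ∧ g * d ∈ D} where
  toFun p := ⟨p.1.2, p.1.2.2, by
    obtain ⟨⟨a, b⟩, hp⟩ := p
    show g * (b : G) ∈ D
    rw [← hp, inv_mul_cancel_right]
    exact a.2⟩
  invFun d := ⟨(⟨g * d.1, d.2.2⟩, ⟨d.1, d.2.1⟩), by rw [mul_inv_cancel_right]⟩
  left_inv p := by
    obtain ⟨⟨⟨a, ha⟩, ⟨b, hb⟩⟩, hp⟩ := p
    refine Subtype.ext (Prod.ext (Subtype.ext ?_) rfl)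
    show g * b = a
    rw [← hp, inv_mul_cancel_right]
  right_inv d := rfl

private lemma diffCount_eq (D : Set G) (g : G) :
    diffCount D g = Nat.card {d : G // d ∈ D ∧ g * d ∈ D} :=
  Nat.card_congr (diffEquivAux D g)

end Aux

/-- Combinatorial transfer for partial difference sets (Theorem 1.1 for PDSs). -/
theorem combinatorial_transfer_pds {G : Type*} [Group G] [Finite G]
    (D : Set G) (v k l μ : ℕ)
    (𝒢 : Subgroup (RHol G)) (X : Subgroup G)
    (h𝒢le : ∀ x ∈ 𝒢, (RHol.aut x) '' D = D)
    (hcard : Nat.card 𝒢 = Nat.card G)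
    (hX : ∀ g : G, g ∈ X ↔ (⟨1, g⟩ : RHol G) ∈ 𝒢)
    (hXnormalG : X.Normal)
    (hXnormal𝒢 : ∀ x ∈ 𝒢, ∀ g ∈ X, ((x⁻¹ * ⟨1, g⟩ * x : RHol G)).el ∈ X)
    (htrans : ∀ h₁ h₂ : G, ∃ x ∈ 𝒢, (RHol.aut x) h₁ * (RHol.el x) * h₂⁻¹ ∈ X)
    (hD : IsPDS D v k l μ) :
    IsPDS {x : 𝒢 | (x : RHol G).el ∈ D} v k l μ := by
  obtain ⟨hv, hk, hl, hμ⟩ := hD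
  -- the projection `el : 𝒢 → G` is bijective
  set e : ↥𝒢 → G := fun x => ((x : RHol G)).el with he
  have hesurj : Function.Surjective e := by
    intro h
    obtain ⟨x, hx𝒢, hxX⟩ := htrans 1 h
    have h1 : x.el * h⁻¹ ∈ X := by simpa using hxX
    have h2 : x.el⁻¹ * h ∈ X := by
      have := hXnormalG.conj_mem _ (X.inv_mem h1) x.el⁻¹
      simpa [mul_assoc] using this
    have hg' : (⟨1, x.el⁻¹ * h⟩ : RHol G) ∈ 𝒢 := (hX _).mp h2
    refine ⟨⟨x * ⟨1, x.el⁻¹ * h⟩, 𝒢.mul_mem hx𝒢 hg'⟩, ?_⟩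
    show (x * (⟨1, x.el⁻¹ * h⟩ : RHol G)).el = h
    simp [RHol.mul_el]
  have hebij : Function.Bijective e :=
    (Nat.bijective_iff_surjective_and_card e).mpr ⟨hesurj, hcard⟩
  -- the twisted projection `f` is bijective
  set f : ↥𝒢 → G := fun y => (y : RHol G).aut.symm (y : RHol G).el with hfdef
  have hfbij : Function.Bijective f := by
    have hcomp : f = (fun g : G => g⁻¹) ∘ e ∘ (fun y : ↥𝒢 => y⁻¹) := by
      funext y
      show (y : RHol G).aut.symm (y : RHol G).el = (((y⁻¹ : ↥𝒢) : RHol G)).el⁻¹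
      simp
    rw [hcomp]
    exact inv_involutive.bijective.comp (hebij.comp inv_involutive.bijective)
  have hone : ∀ z : ↥𝒢, (z : RHol G).el = 1 → z = 1 := by
    intro z hz
    apply hebij.injective
    show (z : RHol G).el = ((1 : ↥𝒢) : RHol G).el
    simp [hz]
  -- key: diffCount transfers along `f`
  have key : ∀ z : ↥𝒢,
      diffCount {x : ↥𝒢 | (x : RHol G).el ∈ D} z = diffCount D (z : RHol G).el := by
    intro z
    rw [diffCount_eq, diffCount_eq]
    refine Nat.card_congr (Equiv.subtypeEquiv (Equiv.ofBijective f hfbij) fun y => ?_)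
    show ((y : RHol G).el ∈ D ∧ ((z * y : ↥𝒢) : RHol G).el ∈ D) ↔
      (f y ∈ D ∧ (z : RHol G).el * f y ∈ D)
    set ψ := (y : RHol G).aut with hψdef
    have hψ : ⇑ψ '' D = D := h𝒢le _ y.2
    have hmem : ∀ a : G, ψ.symm a ∈ D ↔ a ∈ D := by
      intro a
      conv_rhs => rw [← hψ]
      constructor
      · exact fun h => ⟨ψ.symm a, h, ψ.apply_symm_apply a⟩
      · rintro ⟨d, hd, rfl⟩; rwa [ψ.symm_apply_apply]
    have hel : ((z * y : ↥𝒢) : RHol G).el = ψ (z : RHol G).el * (y : RHol G).el := rfl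
    have hfy : f y = ψ.symm (y : RHol G).el := rfl
    rw [hel, hfy]
    refine Iff.symm (and_congr (hmem _) ?_)
    rw [show (z : RHol G).el * ψ.symm (y : RHol G).el
        = ψ.symm (ψ (z : RHol G).el * (y : RHol G).el) by
      rw [map_mul, ψ.symm_apply_apply]]
    exact hmem _
  refine ⟨hcard.trans hv, ?_, ?_, ?_⟩
  · rw [← hk]
    exact Nat.card_congr (Equiv.subtypeEquiv (Equiv.ofBijective e hebij) fun x => Iff.rfl)
  · intro z hz hz1
    rw [key z]
    exact hl _ hz fun h => hz1 (hone z h)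
  · intro z hz hz1
    rw [key z]
    exact hμ _ hz fun h => hz1 (hone z h)
end

section
/- Let X be an abelian group and let G be an abelian group containing X as a subgroup of index 2. If G contains a regular partial difference set D (i.e., a PDS with D = D^{(-1)} and 1 ∉ D), then the generalized dihedral extension of X contains a partial difference set with the same parameters as D. -/
section Defs

variable {G : Type*} [Group G]

/-- `H` is (isomorphic to) the generalized dihedral extension of the abelian group `X`:
`H = ⟨X, g⟩` with `g² = 1` and `g x g = x⁻¹` for all `x ∈ X`, with `X` of index 2. -/
def IsGenDihedralExtOf (H : Type*) [Group H] (X : Type*) [CommGroup X] : Prop :=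
  ∃ (ι : X →* H) (g : H), Function.Injective ι ∧ g ∉ ι.range ∧ g ^ 2 = 1 ∧
    (∀ x : X, g * ι x * g = ι x⁻¹) ∧ (∀ h : H, h ∈ ι.range ∨ ∃ x : X, h = ι x * g)

end Defs

/-- Converse to Dillon's Dihedral Trick for regular PDSs (Theorem 3.2). -/
theorem dillon_converse_pds {G : Type*} [CommGroup G] [Finite G]
    (X : Subgroup G) (hX : X.index = 2)
    (D : Set G) (v k l μ : ℕ)
    (hPDS : IsPDS D v k l μ) (h1 : (1 : G) ∉ D) (hrev : D⁻¹ = D) :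
    ∀ (H : Type*) [Group H], IsGenDihedralExtOf H X → ∃ D' : Set H, IsPDS D' v k l μ := by
  classical
  intro H _ hH
  obtain ⟨ι, g, hinj, hg, hg2, hconj, hfull⟩ := hH
  obtain ⟨hv, hk, hl, hμ⟩ := hPDS
  -- a coset representative t ∉ X
  have hXne : X ≠ ⊤ := by
    intro h
    rw [h, Subgroup.index_top] at hX
    omega
  obtain ⟨t, ht⟩ : ∃ t : G, t ∉ X := by
    by_contra h
    push_neg at h
    exact hXne ((Subgroup.eq_top_iff' X).mpr h)
  have ht' : t⁻¹ ∉ X := fun h => ht (inv_mem_iff.mp h)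
  -- parity of membership under multiplication
  have hpar : ∀ b c : G, b * c⁻¹ ∈ X ↔ (b ∈ X ↔ c ∈ X) := fun b c => by
    rw [Subgroup.mul_mem_iff_of_index_two hX, inv_mem_iff]
  -- basic facts about g
  have hgg : g * g = 1 := by rw [← pow_two]; exact hg2
  have hginv : g⁻¹ = g := inv_eq_of_mul_eq_one_right hgg
  have hcomm : ∀ x : X, g * ι x = ι x⁻¹ * g := by
    intro x
    rw [← hconj x, mul_assoc (g * ι x) g g, hgg, mul_one]
  have hreflinv : ∀ u : X, (ι u * g)⁻¹ = ι u * g := by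
    intro u
    rw [mul_inv_rev, hginv, ← map_inv, hcomm u⁻¹, inv_inv]
  have hP1 : ∀ u w : X, ι u * (ι w)⁻¹ = ι (u * w⁻¹) := by
    intro u w; rw [map_mul, map_inv]
  have hP2 : ∀ u w : X, (ι u * g) * (ι w)⁻¹ = ι (u * w) * g := by
    intro u w
    rw [← map_inv, mul_assoc, hcomm w⁻¹, inv_inv, ← mul_assoc, ← map_mul]
  have hP3 : ∀ u w : X, ι u * (ι w * g)⁻¹ = ι (u * w) * g := by
    intro u w
    rw [hreflinv, ← mul_assoc, ← map_mul]
  have hP4 : ∀ u w : X, (ι u * g) * (ι w * g)⁻¹ = ι (u * w⁻¹) := by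
    intro u w
    rw [hreflinv, mul_assoc, ← mul_assoc g (ι w) g, hconj w, ← map_mul]
  have hI : ∀ u w : X, ι u = ι w ↔ (u : G) = (w : G) := fun u w =>
    ⟨fun h => congrArg Subtype.val (hinj h), fun h => congrArg ι (Subtype.ext h)⟩
  have hIg : ∀ u w : X, ι u * g = ι w * g ↔ (u : G) = (w : G) := fun u w => by
    rw [mul_left_inj, hI]
  have hne : ∀ u w : X, ι u * g ≠ ι w := by
    intro u w h
    exact hg ⟨u⁻¹ * w, by rw [map_mul, map_inv, ← h, ← mul_assoc, inv_mul_cancel, one_mul]⟩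
  -- the transfer bijection
  set φ : G → H := fun a =>
    if h : a ∈ X then ι ⟨a, h⟩
    else ι ⟨t⁻¹ * a, (Subgroup.mul_mem_iff_of_index_two hX).mpr (iff_of_false ht' h)⟩ * g
    with hφdef
  have hφ_mem : ∀ (b : G) (hb : b ∈ X), φ b = ι ⟨b, hb⟩ := by
    intro b hb; rw [hφdef]; exact dif_pos hb
  have hφ_not : ∀ (b : G) (hb : b ∉ X),
      φ b = ι ⟨t⁻¹ * b, (Subgroup.mul_mem_iff_of_index_two hX).mpr (iff_of_false ht' hb)⟩ * g := by
    intro b hb; rw [hφdef]; exact dif_neg hb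
  have hφinj : Function.Injective φ := by
    intro b c hbc
    by_cases hb : b ∈ X <;> by_cases hc : c ∈ X
    · rw [hφ_mem b hb, hφ_mem c hc] at hbc
      exact congrArg Subtype.val (hinj hbc)
    · rw [hφ_mem b hb, hφ_not c hc] at hbc
      exact absurd hbc.symm (hne _ _)
    · rw [hφ_not b hb, hφ_mem c hc] at hbc
      exact absurd hbc (hne _ _)
    · rw [hφ_not b hb, hφ_not c hc] at hbc
      have := (hIg _ _).mp hbc
      exact mul_left_cancel this
  have hφ1 : φ 1 = 1 := by
    rw [hφ_mem 1 (one_mem X)]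
    exact map_one ι
  have hφsurj : Function.Surjective φ := by
    intro h
    rcases hfull h with hx | ⟨x, hx⟩
    · obtain ⟨x, hx⟩ := hx
      exact ⟨(x : G), by rw [hφ_mem _ x.2]; exact hx⟩
    · refine ⟨t * (x : G), ?_⟩
      have hb : t * (x : G) ∉ X := fun hmem => ht (by simpa using mul_mem hmem (inv_mem x.2))
      rw [hφ_not _ hb, hx]
      congr 1
      exact congrArg ι (Subtype.ext (inv_mul_cancel_left t (x : G)))
  have hφeq1 : ∀ b : G, φ b = 1 ↔ b = 1 := fun b =>
    ⟨fun h => hφinj (h.trans hφ1.symm), fun h => h ▸ hφ1⟩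
  -- inversion stabilizes D
  have hDinv : ∀ d : G, d ∈ D → d⁻¹ ∈ D := by
    intro d hd
    rw [← hrev]
    simpa using hd
  let invD : ↥D ≃ ↥D :=
    ⟨fun d => ⟨(d : G)⁻¹, hDinv _ d.2⟩, fun d => ⟨(d : G)⁻¹, hDinv _ d.2⟩,
      fun d => by simp, fun d => by simp⟩
  let eD : ↥D ≃ ↥(φ '' D) := Equiv.Set.image φ D hφinj
  -- the count transfer
  have hcount : ∀ a : G, diffCount (φ '' D) (φ a) = diffCount D a := by
    intro a
    unfold diffCount
    by_cases hA : a ∈ X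
    · have hiff : ∀ b c : G, b * c⁻¹ = a ↔ φ b * (φ c)⁻¹ = φ a := by
        intro b c
        by_cases hb : b ∈ X <;> by_cases hc : c ∈ X
        · rw [hφ_mem b hb, hφ_mem c hc, hφ_mem a hA, hP1, hI]
          push_cast
          rfl
        · rw [hφ_mem b hb, hφ_not c hc, hφ_mem a hA, hP3]
          exact iff_of_false (fun h => hc (((hpar b c).mp (h ▸ hA)).mp hb)) (hne _ _)
        · rw [hφ_not b hb, hφ_mem c hc, hφ_mem a hA, hP2]
          exact iff_of_false (fun h => hb (((hpar b c).mp (h ▸ hA)).mpr hc)) (hne _ _)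
        · rw [hφ_not b hb, hφ_not c hc, hφ_mem a hA, hP4, hI]
          push_cast
          rw [show t⁻¹ * b * (t⁻¹ * c)⁻¹ = b * c⁻¹ by rw [← div_eq_mul_inv, mul_div_mul_left_eq_div, div_eq_mul_inv]]
      refine (Nat.card_congr (Equiv.subtypeEquiv (Equiv.prodCongr eD eD) ?_)).symm
      rintro ⟨⟨b, hb⟩, ⟨c, hc⟩⟩
      simpa [eD] using hiff b c
    · have hiff : ∀ b c : G, b * c⁻¹ = a ↔ φ b * (φ c⁻¹)⁻¹ = φ a := by
        intro b c
        by_cases hb : b ∈ X <;> by_cases hc : c ∈ X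
        · rw [hφ_mem b hb, hφ_mem c⁻¹ (inv_mem hc), hφ_not a hA, hP1]
          exact iff_of_false (fun h => hA (h ▸ mul_mem hb (inv_mem hc)))
            (fun h => hne _ _ h.symm)
        · rw [hφ_mem b hb, hφ_not c⁻¹ (fun h => hc (inv_mem_iff.mp h)), hφ_not a hA, hP3, hIg]
          push_cast
          rw [mul_left_comm b t⁻¹ c⁻¹, mul_right_inj]
        · rw [hφ_not b hb, hφ_mem c⁻¹ (inv_mem hc), hφ_not a hA, hP2, hIg]
          push_cast
          rw [show t⁻¹ * b * c⁻¹ = t⁻¹ * (b * c⁻¹) by rw [mul_assoc], mul_right_inj]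
        · rw [hφ_not b hb, hφ_not c⁻¹ (fun h => hc (inv_mem_iff.mp h)), hφ_not a hA, hP4]
          exact iff_of_false (fun h => hA (h ▸ (hpar b c).mpr (iff_of_false hb hc)))
            (fun h => hne _ _ h.symm)
      refine (Nat.card_congr (Equiv.subtypeEquiv (Equiv.prodCongr eD (invD.trans eD)) ?_)).symm
      rintro ⟨⟨b, hb⟩, ⟨c, hc⟩⟩
      simpa [eD, invD] using hiff b c
  refine ⟨φ '' D, ?_, ?_, ?_, ?_⟩
  · rw [← hv]
    exact (Nat.card_eq_of_bijective φ ⟨hφinj, hφsurj⟩).symm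
  · rw [← hk]
    exact (Nat.card_congr (Equiv.Set.image φ D hφinj)).symm
  · rintro h hh hne1
    obtain ⟨b, hbD, rfl⟩ := hh
    rw [hcount b]
    exact hl b hbD fun hb1 => hne1 (by rw [hb1]; exact hφ1)
  · intro h hh hne1
    obtain ⟨b, rfl⟩ := hφsurj h
    rw [hcount b]
    exact hμ b (fun hbD => hh (Set.mem_image_of_mem φ hbD))
      fun hb1 => hne1 (by rw [hb1]; exact hφ1)
end

section
/- Let G be an abelian group containing a reversible difference set D and a subgroup X of index 2. Then every abelian group containing X as a subgroup of index 2 contains a difference set with the same parameters as D. -/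
noncomputable def pairCount {G : Type*} [Group G] (D : Set G) (u : G) : ℕ :=
  Nat.card {p : G × G | p.1 ∈ D ∧ p.2 ∈ D ∧ p.1 * p.2⁻¹ = u}

lemma diffCount_eq_pairCount {G : Type*} [Group G] (D : Set G) (u : G) :
    diffCount D u = pairCount D u := by
  apply Nat.card_congr
  exact ⟨fun q => ⟨(q.1.1, q.1.2), q.1.1.2, q.1.2.2, q.2⟩,
    fun q => ⟨(⟨q.1.1, q.2.1⟩, ⟨q.1.2, q.2.2.1⟩), q.2.2.2⟩,
    fun q => rfl, fun q => rfl⟩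

open Classical in
noncomputable def splitEquiv {α : Type*} (q P : α → Prop) :
    {x // q x} ≃ {x // q x ∧ P x} ⊕ {x // q x ∧ ¬ P x} where
  toFun x := if h : P x.1 then Sum.inl ⟨x.1, x.2, h⟩ else Sum.inr ⟨x.1, x.2, h⟩
  invFun y := y.elim (fun z => ⟨z.1, z.2.1⟩) (fun z => ⟨z.1, z.2.1⟩)
  left_inv x := by by_cases h : P x.1 <;> simp [h]
  right_inv y := by
    rcases y with z | z
    · simp [z.2.2]
    · simp [z.2.2]

lemma card_split {α : Type*} [Finite α] (q P : α → Prop) :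
    Nat.card {x // q x} = Nat.card {x // q x ∧ P x} + Nat.card {x // q x ∧ ¬ P x} := by
  rw [Nat.card_congr (splitEquiv q P), Nat.card_sum]


/-- Corollary 3.3: a reversible DS in an abelian group `G` with index-2 subgroup `X`
yields a DS with the same parameters in every abelian group containing `X` with index 2. -/
theorem dillon_reversible_corollary {G : Type*} [CommGroup G] [Finite G]
    (D : Set G) (v k l : ℕ) (hD : IsDiffSet D v k l) (hrev : D⁻¹ = D)
    (X : Subgroup G) (hX : X.index = 2) :
    ∀ (H : Type*) [CommGroup H] [Finite H] (ι : X →* H),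
      Function.Injective ι → ι.range.index = 2 →
      ∃ D' : Set H, IsDiffSet D' v k l := by
  classical
  obtain ⟨hv, hk, hl⟩ := hD
  intro H _ _ ι hι hind
  -- inverses stay in D
  have hDinv : ∀ {b : G}, b ∈ D → b⁻¹ ∈ D := by
    intro b hb
    rw [← hrev]
    simpa using hb
  -- choose coset representatives
  obtain ⟨g, hg⟩ : ∃ g : G, g ∉ X := by
    by_contra hc
    push_neg at hc
    have : X = ⊤ := Subgroup.eq_top_iff' X |>.2 hc
    rw [this, Subgroup.index_top] at hX
    omega
  obtain ⟨h, hh⟩ : ∃ h : H, h ∉ ι.range := by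
    by_contra hc
    push_neg at hc
    have : ι.range = ⊤ := Subgroup.eq_top_iff' ι.range |>.2 hc
    rw [this, Subgroup.index_top] at hind
    omega
  have memX : ∀ a b : G, a * b ∈ X ↔ (a ∈ X ↔ b ∈ X) := fun a b =>
    Subgroup.mul_mem_iff_of_index_two hX
  have memR : ∀ a b : H, a * b ∈ ι.range ↔ (a ∈ ι.range ↔ b ∈ ι.range) := fun a b =>
    Subgroup.mul_mem_iff_of_index_two hind
  have hgi : g⁻¹ ∉ X := fun hc => hg (by simpa using hc)
  have hhi : h⁻¹ ∉ ι.range := fun hc => hh (by simpa using hc)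
  have hXmem : ∀ {x : G}, x ∉ X → g⁻¹ * x ∈ X := fun {x} hx =>
    (memX g⁻¹ x).2 (iff_of_false hgi hx)
  -- the transfer map
  set f : G → H := fun x =>
    if hx : x ∈ X then ι ⟨x, hx⟩ else h * ι ⟨g⁻¹ * x, hXmem hx⟩ with hf
  have fpos : ∀ {x : G} (hx : x ∈ X), f x = ι ⟨x, hx⟩ := by
    intro x hx; simp [hf, hx]
  have fneg : ∀ {x : G} (hx : x ∉ X), f x = h * ι ⟨g⁻¹ * x, hXmem hx⟩ := by
    intro x hx; simp [hf, hx]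
  have fr : ∀ {x : G}, x ∈ X → f x ∈ ι.range := by
    intro x hx; rw [fpos hx]; exact ⟨_, rfl⟩
  have fnr : ∀ {x : G}, x ∉ X → f x ∉ ι.range := by
    intro x hx hc
    rw [fneg hx] at hc
    exact hh (by simpa using mul_mem hc (inv_mem (⟨_, rfl⟩ : ι ⟨g⁻¹ * x, hXmem hx⟩ ∈ ι.range)))
  have frange : ∀ {x : G}, f x ∈ ι.range ↔ x ∈ X := by
    intro x
    constructor
    · intro hc; by_contra hx; exact fnr hx hc
    · exact fr
  -- same-coset difference formula
  have fsame : ∀ (x y : G) (hxy : x * y⁻¹ ∈ X), f x * (f y)⁻¹ = ι ⟨x * y⁻¹, hxy⟩ := by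
    intro x y hxy
    have hiff : x ∈ X ↔ y ∈ X := by
      have := (memX x y⁻¹).1 hxy
      simpa using this
    by_cases hx : x ∈ X
    · have hy : y ∈ X := hiff.1 hx
      rw [fpos hx, fpos hy, ← map_inv, ← map_mul]
      rfl
    · have hy : y ∉ X := fun hc => hx (hiff.2 hc)
      rw [fneg hx, fneg hy, ← div_eq_mul_inv, mul_div_mul_left_eq_div, div_eq_mul_inv,
        ← map_inv, ← map_mul]
      congr 1
      ext
      push_cast
      rw [← div_eq_mul_inv, ← div_eq_mul_inv, mul_div_mul_left_eq_div]
  have finj : Function.Injective f := by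
    intro a b hab
    by_cases ha : a ∈ X
    · have hb : b ∈ X := by
        by_contra hb
        exact fnr hb (hab ▸ fr ha)
      rw [fpos ha, fpos hb] at hab
      have := hι hab
      simpa using congrArg (Subtype.val) this
    · have hb : b ∉ X := by
        intro hb
        exact fnr ha (by rw [hab]; exact fr hb)
      rw [fneg ha, fneg hb] at hab
      have h2 := mul_left_cancel hab
      have := hι h2
      have h3 : g⁻¹ * a = g⁻¹ * b := congrArg Subtype.val this
      exact mul_left_cancel h3
  -- cardinalities
  have hcardX : Nat.card ι.range = Nat.card X :=
    Nat.card_congr (MonoidHom.ofInjective hι).toEquiv.symm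
  have hvH : Nat.card H = v := by
    have h1 := Subgroup.index_mul_card X
    have h2 := Subgroup.index_mul_card ι.range
    rw [hX] at h1
    rw [hind, hcardX] at h2
    omega
  refine ⟨f '' D, hvH, ?_, ?_⟩
  · rw [Nat.card_coe_set_eq, Set.ncard_image_of_injective _ finj,
      ← Nat.card_coe_set_eq]
    exact hk
  intro t ht
  rw [diffCount_eq_pairCount]
  by_cases htr : t ∈ ι.range
  · -- same-coset case
    obtain ⟨s, hs⟩ := htr
    have hs1 : (s : G) ≠ 1 := by
      intro hc
      apply ht
      rw [← hs]
      have : s = 1 := by exact_mod_cast hc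
      rw [this, map_one]
    have : pairCount (f '' D) t = pairCount D (s : G) := by
      apply Nat.card_congr
      apply Equiv.symm
      apply Set.BijOn.equiv (fun p : G × G => (f p.1, f p.2))
      refine ⟨?_, ?_, ?_⟩
      · rintro ⟨x, y⟩ ⟨hxD, hyD, hxy⟩
        have hmem : x * y⁻¹ ∈ X := hxy ▸ s.2
        refine ⟨⟨x, hxD, rfl⟩, ⟨y, hyD, rfl⟩, ?_⟩
        rw [fsame x y hmem, ← hs]
        congr 1
        exact Subtype.ext hxy
      · intro p _ q _ hpq
        have h1 := congrArg Prod.fst hpq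
        have h2 := congrArg Prod.snd hpq
        exact Prod.ext (finj h1) (finj h2)
      · rintro ⟨e₁, e₂⟩ ⟨⟨d₁, hd₁, he₁⟩, ⟨d₂, hd₂, he₂⟩, he⟩
        simp only at he₁ he₂ he
        have hrange : f d₁ ∈ ι.range ↔ f d₂ ∈ ι.range := by
          have hm : e₁ * e₂⁻¹ ∈ ι.range := by rw [he]; exact ⟨s, hs⟩
          rw [← he₁, ← he₂] at hm
          have := (memR (f d₁) (f d₂)⁻¹).1 hm
          simpa using this
        have hc : d₁ ∈ X ↔ d₂ ∈ X := by
          rw [← frange, ← frange]; exact hrange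
        have hmem : d₁ * d₂⁻¹ ∈ X := by
          rw [memX]
          simpa using hc
        have heq : f d₁ * (f d₂)⁻¹ = ι s := by rw [he₁, he₂, he, hs]
        rw [fsame d₁ d₂ hmem] at heq
        have : d₁ * d₂⁻¹ = (s : G) := congrArg Subtype.val (hι heq)
        exact ⟨(d₁, d₂), ⟨hd₁, hd₂, this⟩, by simp [he₁, he₂]⟩
    rw [this]
    rw [← diffCount_eq_pairCount]
    exact hl _ hs1
  · -- opposite-coset case
    obtain ⟨w₁, hw₁⟩ : ∃ w : X, ι w = t * h := (memR t h).2 (iff_of_false htr hh)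
    obtain ⟨w₂, hw₂⟩ : ∃ w : X, ι w = h⁻¹ * t := (memR h⁻¹ t).2 (iff_of_false hhi htr)
    set u₁ : G := (w₁ : G) * g⁻¹ with hu₁def
    set u₂ : G := g * (w₂ : G) with hu₂def
    have hu₁ : u₁ ∉ X := by
      intro hc
      rw [memX] at hc
      exact hgi (hc.1 w₁.2)
    have hu₂ : u₂ ∉ X := by
      intro hc
      rw [memX] at hc
      exact hg (hc.2 w₂.2)
    -- the mixed-pair criteria
    have key1 : ∀ (a b : G) (ha : a ∈ X) (hb : b ∉ X),
        (f a * (f b)⁻¹ = t ↔ a * b⁻¹ = u₁) := by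
      intro a b ha hb
      rw [fpos ha, fneg hb, mul_inv_eq_iff_eq_mul, ← mul_assoc, ← hw₁, ← map_mul,
        hι.eq_iff, Subtype.ext_iff]
      push_cast
      rw [hu₁def, mul_inv_eq_iff_eq_mul, mul_assoc]
    have key2 : ∀ (a b : G) (ha : a ∈ X) (hb : b ∉ X),
        (f b * (f a)⁻¹ = t ↔ b * a⁻¹ = u₂) := by
      intro a b ha hb
      rw [fneg hb, fpos ha, mul_assoc, ← map_inv, ← map_mul]
      rw [← eq_inv_mul_iff_mul_eq, ← hw₂, hι.eq_iff, Subtype.ext_iff]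
      push_cast
      rw [hu₂def, mul_assoc, ← inv_mul_eq_iff_eq_mul]
    -- counts of "product" pairs
    have prodCount : ∀ u : G, u ∉ X →
        Nat.card {p : G × G // (p.1 ∈ D ∧ p.2 ∈ D ∧ p.1 * p.2⁻¹ = u) ∧ p.1 ∈ X} +
        Nat.card {p : G × G // (p.1 ∈ D ∧ p.2 ∈ D ∧ p.1 * p.2⁻¹ = u) ∧ ¬ p.1 ∈ X} = l := by
      intro u hu
      have hu1 : u ≠ 1 := fun hc => hu (hc ▸ one_mem X)
      have := hl u hu1
      rw [diffCount_eq_pairCount] at this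
      rw [← this]
      unfold pairCount
      exact (card_split (fun p : G × G => p.1 ∈ D ∧ p.2 ∈ D ∧ p.1 * p.2⁻¹ = u)
        (fun p => p.1 ∈ X)).symm
    -- both halves have the same cardinality (using reversibility)
    have halves : ∀ u : G, u ∉ X →
        Nat.card {p : G × G // (p.1 ∈ D ∧ p.2 ∈ D ∧ p.1 * p.2⁻¹ = u) ∧ p.1 ∈ X} =
        Nat.card {p : G × G // (p.1 ∈ D ∧ p.2 ∈ D ∧ p.1 * p.2⁻¹ = u) ∧ ¬ p.1 ∈ X} := by
      intro u hu
      apply Nat.card_congr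
      refine ⟨fun q => ⟨(q.1.2⁻¹, q.1.1⁻¹), ?_⟩, fun q => ⟨(q.1.2⁻¹, q.1.1⁻¹), ?_⟩, ?_, ?_⟩
      · obtain ⟨⟨h1, h2, h3⟩, h4⟩ := q.2
        refine ⟨⟨hDinv h2, hDinv h1, ?_⟩, ?_⟩
        · rw [inv_inv, mul_comm]; exact h3
        · intro hc
          exact hu (by rw [← h3, mul_comm]; exact mul_mem hc h4)
      · obtain ⟨⟨h1, h2, h3⟩, h4⟩ := q.2
        refine ⟨⟨hDinv h2, hDinv h1, ?_⟩, ?_⟩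
        · rw [inv_inv, mul_comm]; exact h3
        · by_contra hc
          exact hu (by rw [← h3]; exact (memX _ _).2 (iff_of_false h4 hc))
      · intro q
        apply Subtype.ext
        apply Prod.ext <;> simp
      · intro q
        apply Subtype.ext
        apply Prod.ext <;> simp
    -- transfer the two mixed-pair sets
    have count1 :
        Nat.card {p : H × H | (p.1 ∈ f '' D ∧ p.2 ∈ f '' D ∧ p.1 * p.2⁻¹ = t) ∧ p.1 ∈ ι.range} =
        Nat.card {p : G × G // (p.1 ∈ D ∧ p.2 ∈ D ∧ p.1 * p.2⁻¹ = u₁) ∧ p.1 ∈ X} := by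
      apply Nat.card_congr
      apply Equiv.symm
      apply Set.BijOn.equiv (fun p : G × G => (f p.1, f p.2))
      refine ⟨?_, ?_, ?_⟩
      · rintro ⟨x, y⟩ ⟨⟨hxD, hyD, hxy⟩, hxX⟩
        have hyX : y ∉ X := by
          intro hc
          apply hu₁
          rw [← hxy]
          exact mul_mem hxX (inv_mem hc)
        exact ⟨⟨⟨x, hxD, rfl⟩, ⟨y, hyD, rfl⟩, (key1 x y hxX hyX).2 hxy⟩, fr hxX⟩
      · intro p _ q _ hpq
        exact Prod.ext (finj (congrArg Prod.fst hpq)) (finj (congrArg Prod.snd hpq))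
      · rintro ⟨e₁, e₂⟩ ⟨⟨⟨d₁, hd₁, he₁⟩, ⟨d₂, hd₂, he₂⟩, he⟩, her⟩
        simp only at he₁ he₂ he her
        have hd₁X : d₁ ∈ X := frange.1 (he₁ ▸ her)
        have hd₂X : d₂ ∉ X := by
          intro hc
          apply htr
          rw [← he, ← he₁, ← he₂]
          have := fr hc
          have h2 := (memR (f d₁) (f d₂)⁻¹).2 (iff_of_true (he₁ ▸ her) (by simpa using this))
          exact h2
        have := (key1 d₁ d₂ hd₁X hd₂X).1 (by rw [he₁, he₂, he])
        exact ⟨(d₁, d₂), ⟨⟨hd₁, hd₂, this⟩, hd₁X⟩, by simp [he₁, he₂]⟩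
    have count2 :
        Nat.card {p : H × H | (p.1 ∈ f '' D ∧ p.2 ∈ f '' D ∧ p.1 * p.2⁻¹ = t) ∧ ¬ p.1 ∈ ι.range} =
        Nat.card {p : G × G // (p.1 ∈ D ∧ p.2 ∈ D ∧ p.1 * p.2⁻¹ = u₂) ∧ ¬ p.1 ∈ X} := by
      apply Nat.card_congr
      apply Equiv.symm
      apply Set.BijOn.equiv (fun p : G × G => (f p.1, f p.2))
      refine ⟨?_, ?_, ?_⟩
      · rintro ⟨x, y⟩ ⟨⟨hxD, hyD, hxy⟩, hxX⟩
        have hyX : y ∈ X := by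
          by_contra hc
          apply hu₂
          rw [← hxy]
          exact (memX x y⁻¹).2 (iff_of_false hxX (by simpa using hc))
        exact ⟨⟨⟨x, hxD, rfl⟩, ⟨y, hyD, rfl⟩, (key2 y x hyX hxX).2 hxy⟩, fnr hxX⟩
      · intro p _ q _ hpq
        exact Prod.ext (finj (congrArg Prod.fst hpq)) (finj (congrArg Prod.snd hpq))
      · rintro ⟨e₁, e₂⟩ ⟨⟨⟨d₁, hd₁, he₁⟩, ⟨d₂, hd₂, he₂⟩, he⟩, her⟩
        simp only at he₁ he₂ he her
        have hd₁X : d₁ ∉ X := fun hc => her (he₁ ▸ fr hc)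
        have hd₂X : d₂ ∈ X := by
          by_contra hc
          apply htr
          rw [← he, ← he₁, ← he₂]
          exact (memR (f d₁) (f d₂)⁻¹).2
            (iff_of_false (fun hm => her (he₁ ▸ hm)) (by simpa using fnr hc))
        have := (key2 d₂ d₁ hd₂X hd₁X).1 (by rw [he₁, he₂, he])
        exact ⟨(d₁, d₂), ⟨⟨hd₁, hd₂, this⟩, hd₁X⟩, by simp [he₁, he₂]⟩
    -- put it together
    have hsplit : pairCount (f '' D) t =
        Nat.card {p : H × H | (p.1 ∈ f '' D ∧ p.2 ∈ f '' D ∧ p.1 * p.2⁻¹ = t) ∧ p.1 ∈ ι.range} +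
        Nat.card {p : H × H | (p.1 ∈ f '' D ∧ p.2 ∈ f '' D ∧ p.1 * p.2⁻¹ = t) ∧ ¬ p.1 ∈ ι.range} := by
      unfold pairCount
      exact card_split (fun p : H × H => p.1 ∈ f '' D ∧ p.2 ∈ f '' D ∧ p.1 * p.2⁻¹ = t)
        (fun p => p.1 ∈ ι.range)
    rw [hsplit, count1, count2]
    have e1 := prodCount u₁ hu₁
    have e2 := prodCount u₂ hu₂
    have e3 := halves u₁ hu₁
    have e4 := halves u₂ hu₂
    omega
end

section
/- Let F = GF(2^t) with trace map tr(α) = Σ_{i=0}^{t-1} α^{2^i}. For any m ≥ 0, any g of multiplicative order 2^t − 1, and any 1 ≤ ℓ ≤ t−1: tr( g^{m+2^{ℓ-1}} + g^{2m+2^{ℓ-1}} + tr(g)·g^m + Σ_{0 ≤ k ≤ t-1, k ≢ ℓ-1, ℓ-2 (mod t)} g^{m+2^k} ) = 0. -/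
set_option linter.unusedVariables false



/-- The trace identity of Lemma 5.5: in `GF(2^t)`, with `tr(x) = ∑_{i<t} x^(2^i)` and `g`
of multiplicative order `2^t - 1`, for `1 ≤ ℓ ≤ t-1` and any `m`,
`tr(g^(m+2^(ℓ-1)) + g^(2m+2^(ℓ-1)) + tr(g)·g^m + ∑_{k ≠ ℓ-1, ℓ-2 mod t} g^(m+2^k)) = 0`. -/
theorem trace_identity (t : ℕ) (F : Type*) [Field F] [Fintype F]
    (hF : Fintype.card F = 2 ^ t) (g : F) (hg : orderOf g = 2 ^ t - 1)
    (m ℓ : ℕ) (hℓ1 : 1 ≤ ℓ) (hℓ2 : ℓ ≤ t - 1) :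
    ∑ i ∈ Finset.range t,
      (g ^ (m + 2 ^ (ℓ - 1)) + g ^ (2 * m + 2 ^ (ℓ - 1)) +
        (∑ j ∈ Finset.range t, g ^ 2 ^ j) * g ^ m +
        ∑ k ∈ (Finset.range t).filter (fun k => k ≠ ℓ - 1 ∧ k ≠ (ℓ + t - 2) % t),
          g ^ (m + 2 ^ k)) ^ 2 ^ i = 0 := by
  have ht : 2 ≤ t := by omega
  have hchar : CharP F 2 := by
    have h1 : ((2 ^ t : ℕ) : F) = 0 := by rw [← hF]; exact FiniteField.cast_card_eq_zero F
    have h2 : (ringChar F) ∣ 2 ^ t := (ringChar.spec F (2 ^ t)).mp h1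
    have hp : (ringChar F).Prime := CharP.char_is_prime F (ringChar F)
    have h3 : ringChar F ∣ 2 := hp.dvd_of_dvd_pow h2
    have h4 : ringChar F = 2 := (Nat.prime_dvd_prime_iff_eq hp Nat.prime_two).mp h3
    exact h4 ▸ ringChar.charP F
  haveI := hchar
  have hfrob : ∀ x : F, x ^ 2 ^ t = x := by
    intro x
    have := FiniteField.pow_card x
    rwa [hF] at this
  set k0 := (ℓ + t - 2) % t with hk0
  have hk0val : (2 ≤ ℓ ∧ k0 = ℓ - 2) ∨ (ℓ = 1 ∧ k0 = t - 1) := by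
    rcases Nat.lt_or_ge ℓ 2 with h | h
    · right
      have hl : ℓ = 1 := by omega
      refine ⟨hl, ?_⟩
      rw [hk0, hl]
      have h5 : 1 + t - 2 = t - 1 := by omega
      rw [h5, Nat.mod_eq_of_lt (by omega)]
    · left
      refine ⟨h, ?_⟩
      rw [hk0]
      have h5 : ℓ + t - 2 = (ℓ - 2) + t := by omega
      rw [h5, Nat.add_mod_right, Nat.mod_eq_of_lt (by omega)]
  have hk0lt : k0 < t := by rcases hk0val with ⟨_, h⟩ | ⟨_, h⟩ <;> omega
  have hne : ℓ - 1 ≠ k0 := by rcases hk0val with ⟨_, h⟩ | ⟨_, h⟩ <;> omega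
  have hℓlt : ℓ - 1 < t := by omega
  set y := g ^ (m + 2 ^ k0) with hy
  have hinner :
      g ^ (m + 2 ^ (ℓ - 1)) + g ^ (2 * m + 2 ^ (ℓ - 1)) +
        (∑ j ∈ Finset.range t, g ^ 2 ^ j) * g ^ m +
        ∑ k ∈ (Finset.range t).filter (fun k => k ≠ ℓ - 1 ∧ k ≠ k0),
          g ^ (m + 2 ^ k) = y ^ 2 + y := by
    have hsum : (∑ j ∈ Finset.range t, g ^ 2 ^ j) * g ^ m
        = ∑ j ∈ Finset.range t, g ^ (m + 2 ^ j) := by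
      rw [Finset.sum_mul]
      refine Finset.sum_congr rfl fun j _ => ?_
      rw [pow_add, mul_comm]
    have hsplit : ∑ j ∈ Finset.range t, g ^ (m + 2 ^ j)
        = (∑ k ∈ (Finset.range t).filter (fun k => k ≠ ℓ - 1 ∧ k ≠ k0), g ^ (m + 2 ^ k))
          + (g ^ (m + 2 ^ (ℓ - 1)) + y) := by
      rw [← Finset.sum_filter_add_sum_filter_not (Finset.range t)
        (fun k => k ≠ ℓ - 1 ∧ k ≠ k0) (fun k => g ^ (m + 2 ^ k))]
      congr 1
      have hset : (Finset.range t).filter (fun k => ¬(k ≠ ℓ - 1 ∧ k ≠ k0)) = {ℓ - 1, k0} := by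
        ext k
        simp only [Finset.mem_filter, Finset.mem_range, Finset.mem_insert,
          Finset.mem_singleton, not_and_or, not_not]
        constructor
        · rintro ⟨_, h | h⟩ <;> simp [h]
        · rintro (h | h) <;> subst h <;> omega
      rw [hset, Finset.sum_pair hne]
    have hy2 : (m + 2 ^ k0) * 2 = 2 * m + 2 ^ (k0 + 1) := by rw [pow_succ]; ring
    have hgexp : g ^ 2 ^ (k0 + 1) = g ^ 2 ^ (ℓ - 1) := by
      rcases hk0val with ⟨h2, hk⟩ | ⟨h1, hk⟩
      · have hp1 : k0 + 1 = ℓ - 1 := by omega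
        rw [hp1]
      · have hp1 : k0 + 1 = t := by omega
        rw [hp1, hfrob, h1]
        norm_num
    have hB : g ^ (2 * m + 2 ^ (ℓ - 1)) = y ^ 2 := by
      rw [hy, ← pow_mul, hy2, pow_add, pow_add, hgexp]
    rw [hsum, hsplit, hB]
    have h2 : (2 : F) = 0 := CharTwo.two_eq_zero
    linear_combination (g ^ (m + 2 ^ (ℓ - 1)) +
      ∑ k ∈ (Finset.range t).filter (fun k => k ≠ ℓ - 1 ∧ k ≠ k0), g ^ (m + 2 ^ k)) * h2
  rw [hinner]
  have hexp : ∀ i ∈ Finset.range t, (y ^ 2 + y) ^ 2 ^ i = (y ^ 2) ^ 2 ^ i + y ^ 2 ^ i := by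
    intro i _
    haveI : Fact (Nat.Prime 2) := ⟨Nat.prime_two⟩
    exact add_pow_char_pow (R := F) (p := 2) _ _ i
  rw [Finset.sum_congr rfl hexp, Finset.sum_add_distrib]
  have hshift : ∑ i ∈ Finset.range t, (y ^ 2) ^ 2 ^ i = ∑ i ∈ Finset.range t, y ^ 2 ^ i := by
    have h1 : ∀ i, (y ^ 2) ^ 2 ^ i = y ^ 2 ^ (i + 1) := by
      intro i
      rw [← pow_mul, pow_succ 2 i, Nat.mul_comm]
    have key : (∑ i ∈ Finset.range t, (y ^ 2) ^ 2 ^ i) + y ^ 2 ^ 0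
        = (∑ i ∈ Finset.range t, y ^ 2 ^ i) + y ^ 2 ^ t := by
      calc (∑ i ∈ Finset.range t, (y ^ 2) ^ 2 ^ i) + y ^ 2 ^ 0
          = (∑ i ∈ Finset.range t, y ^ 2 ^ (i + 1)) + y ^ 2 ^ 0 := by
            rw [Finset.sum_congr rfl fun i _ => h1 i]
        _ = ∑ i ∈ Finset.range (t + 1), y ^ 2 ^ i := (Finset.sum_range_succ' (fun i => y ^ 2 ^ i) t).symm
        _ = (∑ i ∈ Finset.range t, y ^ 2 ^ i) + y ^ 2 ^ t := Finset.sum_range_succ (fun i => y ^ 2 ^ i) t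
    rw [hfrob y, pow_zero, pow_one] at key
    exact add_right_cancel key
  rw [hshift]
  exact CharTwo.add_self_eq_zero _
end
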